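/- For every ρ > 0 and every δ ∈ (0,1) there exists a constant C > 0 such that the following holds: for every α > 1, for β ≥ 0 the unique nonnegative real with cosh β = α, for every M ∈ [0, β] such that cosh s − 1 ≤ (1 − δ)(α − 1) for all s ∈ [0, M], and for every φ ∈ ℝ, one has ∫₀^M (α − cosh s)^{−1/2} · |sin φ| / (cosh(s/ρ) − cos φ) ds ≤ C (α − 1)^{−1/2}. -/

import Mathlib

open MeasureTheory Real

lemma cosh_lb (x : ℝ) : 1 + x^2/2 ≤ Real.cosh x := by
  have key : ∀ y : ℝ, 0 ≤ y → 1 + y^2/2 ≤ Real.cosh y := by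
    intro y hy
    have h1 : Real.cosh y = 1 + 2 * Real.sinh (y/2)^2 := by
      have h := Real.cosh_two_mul (y/2)
      have h2 := Real.cosh_sq (y/2)
      rw [show 2 * (y/2) = y by ring] at h
      rw [h, h2]; ring
    have h3 : y/2 ≤ Real.sinh (y/2) := by
      rcases eq_or_lt_of_le hy with h | h
      · simp [← h]
      · exact (Real.self_lt_sinh_iff.mpr (by linarith)).le
    have h4 : (y/2)^2 ≤ Real.sinh (y/2)^2 := pow_le_pow_left₀ (by linarith) h3 2
    rw [h1]; nlinarith
  rcases le_total 0 x with h | h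
  · exact key x h
  · have := key (-x) (by linarith)
    simpa using this

lemma int_bound (b : ℝ) (hb : 0 < b) (M : ℝ) :
    (∫ s in (0:ℝ)..M, (b^2 + s^2)⁻¹) ≤ π / (2*b) := by
  have h1 : ∀ s : ℝ, (b^2 + s^2)⁻¹ = b⁻¹ * (b⁻¹ * (1 + (s/b)^2)⁻¹) := by
    intro s; field_simp
  have h2 : (∫ s in (0:ℝ)..M, (b^2 + s^2)⁻¹)
      = b⁻¹ * ∫ s in (0:ℝ)..M, b⁻¹ * (1 + (s/b)^2)⁻¹ := by
    simp_rw [h1]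
    rw [intervalIntegral.integral_const_mul]
  rw [h2]
  have h3 : (∫ s in (0:ℝ)..M, b⁻¹ * (1 + (s/b)^2)⁻¹)
      = ∫ x in (0/b:ℝ)..(M/b), (1 + x^2)⁻¹ := by
    rw [← intervalIntegral.inv_mul_integral_comp_div (f := fun x => (1 + x^2)⁻¹) (c := b)]
    rw [intervalIntegral.integral_const_mul]
  rw [h3, integral_inv_one_add_sq]
  simp only [zero_div, Real.arctan_zero, sub_zero]
  have h4 : Real.arctan (M/b) ≤ π/2 := (Real.arctan_lt_pi_div_two _).le
  calc b⁻¹ * Real.arctan (M/b) ≤ b⁻¹ * (π/2) :=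
        mul_le_mul_of_nonneg_left h4 (by positivity)
    _ = π / (2*b) := by
        rw [eq_div_iff (by positivity)]; field_simp

/-- Estimate (eqn:arctan): the contribution of `[0, M]` to the diffractive
integral on the flat cone `C(S¹_ρ)`. -/
theorem stmt_10 : ∀ ρ : ℝ, 0 < ρ → ∀ δ : ℝ, 0 < δ → δ < 1 → ∃ C > (0:ℝ),
    ∀ α : ℝ, 1 < α → ∀ β : ℝ, 0 ≤ β → Real.cosh β = α →
    ∀ M : ℝ, 0 ≤ M → M ≤ β →
    (∀ s : ℝ, 0 ≤ s → s ≤ M → Real.cosh s - 1 ≤ (1 - δ) * (α - 1)) →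
    ∀ φ : ℝ,
    (∫ s in (0:ℝ)..M, (α - Real.cosh s) ^ (-(1/2) : ℝ) *
        (|Real.sin φ| / (Real.cosh (s / ρ) - Real.cos φ)))
      ≤ C * (α - 1) ^ (-(1/2) : ℝ) := by
  intro ρ hρ δ hδ0 hδ1
  refine ⟨π * ρ / Real.sqrt δ, by positivity, ?_⟩
  intro α hα β hβ hcoshβ M hM0 hMβ hMδ φ
  have hα1 : (0:ℝ) < α - 1 := by linarith
  have hrpow_pos : (0:ℝ) < (α - 1) ^ (-(1/2) : ℝ) := Real.rpow_pos_of_pos hα1 _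
  by_cases hsin : Real.sin φ = 0
  · simp only [hsin, abs_zero, zero_div, mul_zero, intervalIntegral.integral_zero]
    positivity
  -- setup
  set a : ℝ := 1 - Real.cos φ with ha
  have ha0 : 0 < a := by
    rcases lt_or_eq_of_le (Real.cos_le_one φ) with h | h
    · simp only [ha]; linarith
    · exfalso; apply hsin
      have hs2 : Real.sin φ ^ 2 = 0 := by nlinarith [Real.sin_sq_add_cos_sq φ]
      exact pow_eq_zero_iff two_ne_zero |>.mp hs2
  set b : ℝ := ρ * Real.sqrt (2*a) with hbdef
  have hsq : (0:ℝ) < Real.sqrt (2*a) := Real.sqrt_pos.mpr (by linarith)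
  have hb : 0 < b := by positivity
  set K : ℝ := (δ * (α-1)) ^ (-(1/2) : ℝ) with hKdef
  have hδα : (0:ℝ) < δ * (α-1) := by positivity
  have hK0 : 0 < K := Real.rpow_pos_of_pos hδα _
  have hb2 : b^2 = ρ^2 * (2*a) := by
    rw [hbdef, mul_pow, Real.sq_sqrt (by linarith)]
  -- positivity of inner denominators
  have hcoshden : ∀ s : ℝ, a ≤ Real.cosh (s/ρ) - Real.cos φ := by
    intro s
    have := Real.one_le_cosh (s/ρ)
    simp only [ha]; linarith
  -- pointwise bound
  have hpt : ∀ s ∈ Set.Icc (0:ℝ) M,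
      (α - Real.cosh s) ^ (-(1/2) : ℝ) * (|Real.sin φ| / (Real.cosh (s / ρ) - Real.cos φ))
        ≤ (K * Real.sqrt (2*a) * (2*ρ^2)) * (b^2 + s^2)⁻¹ := by
    intro s hs
    have hc1 : δ * (α-1) ≤ α - Real.cosh s := by
      have := hMδ s hs.1 hs.2; nlinarith
    have e1 : (α - Real.cosh s) ^ (-(1/2) : ℝ) ≤ K :=
      Real.rpow_le_rpow_of_nonpos hδα hc1 (by norm_num)
    have hnum : |Real.sin φ| ≤ Real.sqrt (2*a) := by
      rw [← Real.sqrt_sq_eq_abs]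
      apply Real.sqrt_le_sqrt
      nlinarith [Real.sin_sq_add_cos_sq φ, Real.neg_one_le_cos φ]
    have hden : (b^2 + s^2)/(2*ρ^2) ≤ Real.cosh (s/ρ) - Real.cos φ := by
      have h5 : (s/ρ)^2 * ρ^2 = s^2 := by field_simp
      rw [hb2, div_le_iff₀ (by positivity)]
      have h6 := cosh_lb (s/ρ)
      simp only [ha]
      nlinarith [Real.cos_le_one φ]
    have hdenpos : (0:ℝ) < (b^2 + s^2)/(2*ρ^2) := by positivity
    have e2 : |Real.sin φ| / (Real.cosh (s / ρ) - Real.cos φ)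
        ≤ Real.sqrt (2*a) / ((b^2 + s^2)/(2*ρ^2)) :=
      div_le_div₀ (Real.sqrt_nonneg _) hnum hdenpos hden
    have e3 : Real.sqrt (2*a) / ((b^2 + s^2)/(2*ρ^2))
        = Real.sqrt (2*a) * (2*ρ^2) * (b^2 + s^2)⁻¹ := by
      rw [div_div_eq_mul_div, div_eq_mul_inv]
    have hfrac_nonneg : (0:ℝ) ≤ |Real.sin φ| / (Real.cosh (s / ρ) - Real.cos φ) :=
      div_nonneg (abs_nonneg _) (le_trans ha0.le (hcoshden s))
    calc (α - Real.cosh s) ^ (-(1/2) : ℝ) * (|Real.sin φ| / (Real.cosh (s / ρ) - Real.cos φ))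
        ≤ K * (Real.sqrt (2*a) * (2*ρ^2) * (b^2 + s^2)⁻¹) := by
          apply mul_le_mul e1 (e3 ▸ e2) hfrac_nonneg hK0.le
      _ = (K * Real.sqrt (2*a) * (2*ρ^2)) * (b^2 + s^2)⁻¹ := by ring
  -- integrability
  have hfInt : IntervalIntegrable
      (fun s => (α - Real.cosh s) ^ (-(1/2) : ℝ) *
        (|Real.sin φ| / (Real.cosh (s / ρ) - Real.cos φ))) volume 0 M := by
    apply ContinuousOn.intervalIntegrable
    rw [Set.uIcc_of_le hM0]
    apply ContinuousOn.mul
    · apply ContinuousOn.rpow_const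
        ((continuous_const.sub Real.continuous_cosh).continuousOn)
      intro x hx
      left
      have hc1 : δ * (α-1) ≤ α - Real.cosh x := by
        have := hMδ x hx.1 hx.2; nlinarith
      exact ne_of_gt (lt_of_lt_of_le hδα hc1)
    · apply ContinuousOn.div continuousOn_const
      · exact ((Real.continuous_cosh.comp (continuous_id.div_const ρ)).sub
          continuous_const).continuousOn
      · intro x _
        exact ne_of_gt (lt_of_lt_of_le ha0 (hcoshden x))
  have hgInt : IntervalIntegrable
      (fun s => (K * Real.sqrt (2*a) * (2*ρ^2)) * (b^2 + s^2)⁻¹) volume 0 M := by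
    apply Continuous.intervalIntegrable
    apply Continuous.mul continuous_const
    apply Continuous.inv₀ (by fun_prop)
    intro x
    have : (0:ℝ) < b^2 + x^2 := by positivity
    exact ne_of_gt this
  -- chain
  have step1 : (∫ s in (0:ℝ)..M, (α - Real.cosh s) ^ (-(1/2) : ℝ) *
        (|Real.sin φ| / (Real.cosh (s / ρ) - Real.cos φ)))
      ≤ ∫ s in (0:ℝ)..M, (K * Real.sqrt (2*a) * (2*ρ^2)) * (b^2 + s^2)⁻¹ :=
    intervalIntegral.integral_mono_on hM0 hfInt hgInt hpt
  have step2 : (∫ s in (0:ℝ)..M, (K * Real.sqrt (2*a) * (2*ρ^2)) * (b^2 + s^2)⁻¹)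
      = (K * Real.sqrt (2*a) * (2*ρ^2)) * ∫ s in (0:ℝ)..M, (b^2 + s^2)⁻¹ :=
    intervalIntegral.integral_const_mul _ _
  have step3 : (K * Real.sqrt (2*a) * (2*ρ^2)) * (∫ s in (0:ℝ)..M, (b^2 + s^2)⁻¹)
      ≤ (K * Real.sqrt (2*a) * (2*ρ^2)) * (π / (2*b)) := by
    apply mul_le_mul_of_nonneg_left (int_bound b hb M) (by positivity)
  have hKval : K = (Real.sqrt δ)⁻¹ * (α-1) ^ (-(1/2) : ℝ) := by
    rw [hKdef, Real.mul_rpow hδ0.le hα1.le]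
    congr 1
    rw [Real.rpow_neg hδ0.le, Real.sqrt_eq_rpow]
  have step4 : (K * Real.sqrt (2*a) * (2*ρ^2)) * (π / (2*b))
      = π * ρ / Real.sqrt δ * (α-1) ^ (-(1/2) : ℝ) := by
    rw [hKval, hbdef]
    have hδs : Real.sqrt δ ≠ 0 := ne_of_gt (Real.sqrt_pos.mpr hδ0)
    field_simp
  linarith [step1, step2 ▸ step3, step4 ▸ (step2 ▸ step3)]
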